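/- Fix X ∈ {B,C,D} and a positive integer n. Let v ∈ W^X_n with k := LD(v) > 0, where Des(u) = {i > 0 : u(i) > u(i+1)} and LD(u) = max({0} ∪ Des(u)). Let l ≥ 1 and let j_1, j_2, ..., j_l be integers such that either j_1 < j_2 < ··· < j_l < k, or X = B, j_1 = 0 and j_2 < ··· < j_l < k; assume that for each a ∈ {1,...,l}, t_{j_a,k} is a reflection of W^X_∞ and ℓ^X(v·t_{j_1,k}·t_{j_2,k}···t_{j_a,k}) = ℓ^X(v)+a. Define the partial order ≺_LD on W^B_∞ by: u ≺_LD w iff LD(u) < LD(w), or 0 < LD(u) = LD(w) and u(LD(u)) < w(LD(w)). Then the element u := v·t_{j_1,k}·t_{j_2,k}···t_{j_l,k} satisfies either (a) u ∈ W^X_n and u ≺_LD v, or (b) u ∈ W^X_{n+1} and LD(u) < LD(v). -/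

import Mathlib

open scoped Classical

noncomputable section

/-! ## Signed permutations -/

/-- We model signed permutations (and ordinary permutations of the positive
integers) inside the group `Equiv.Perm ℤ`. -/
abbrev SPerm := Equiv.Perm ℤ

/-- `w` is a signed permutation: `w(-i) = -w(i)` and finite support. -/
def IsSgn (w : SPerm) : Prop :=
  (∀ i : ℤ, w (-i) = -(w i)) ∧ Set.Finite {i : ℤ | w i ≠ i}

/-- The classical types B, C, D. -/
inductive XType | B | C | D
deriving DecidableEq

/-- `ℓ0(w)`: the number of positive `i` with `w i < 0`. -/
def negCount (w : SPerm) : ℕ := Set.ncard {i : ℤ | 0 < i ∧ w i < 0}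

/-- Membership in `W^X_∞`. -/
def IsW : XType → SPerm → Prop
  | XType.B, w => IsSgn w
  | XType.C, w => IsSgn w
  | XType.D, w => IsSgn w ∧ Even (negCount w)

/-- Membership in `W^X_n`: an element of `W^X_∞` fixing every `i` with `|i| > n`. -/
def IsWn (X : XType) (n : ℕ) (w : SPerm) : Prop :=
  IsW X w ∧ ∀ i : ℤ, (n : ℤ) < |i| → w i = i

/-- `inv(w)`: the number of pairs `(i,j)` of integers with `i < j` and `w i > w j`. -/
def invP (w : SPerm) : ℕ := Set.ncard {p : ℤ × ℤ | p.1 < p.2 ∧ w p.2 < w p.1}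

/-- The Coxeter length functions `ℓ^B = ℓ^C = (inv + ℓ0)/2`, `ℓ^D = (inv - ℓ0)/2`. -/
def lenX : XType → SPerm → ℕ
  | XType.B, w => (invP w + negCount w) / 2
  | XType.C, w => (invP w + negCount w) / 2
  | XType.D, w => (invP w - negCount w) / 2

/-- The element `t_{i,j}` exchanging `i ↔ j` and `-i ↔ -j`; in particular
`t_{0,k}` exchanges `-k ↔ k`, and `t_{j,j} = t_{-j,j} = 1`. -/
def tt (i j : ℤ) : SPerm :=
  if i = 0 then Equiv.swap (-j) j
  else if j = 0 then Equiv.swap (-i) i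
  else if i = j ∨ i = -j then 1
  else Equiv.swap i j * Equiv.swap (-i) (-j)

/-- The simple generators: `st 0 = t_{0,1}`, `st (-1) = t_{-1,2}`,
`st i = t_{i,i+1}` for `i ≥ 1`. -/
def st (a : ℤ) : SPerm := if a = -1 then tt (-1) 2 else tt a (a + 1)

/-- One step of the Demazure product: multiply by `st a` if this increases
length by one, else do nothing. -/
def demStep (X : XType) (w : SPerm) (a : ℤ) : SPerm :=
  if lenX X (w * st a) = lenX X w + 1 then w * st a else w

/-- Demazure product of `w` with the word `l` of simple generators. -/
def demFold (X : XType) (w : SPerm) (l : List ℤ) : SPerm := l.foldl (demStep X) w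

/-- Letters allowed in Hecke words of type `X`. -/
def allowedLetter : XType → ℤ → Prop
  | XType.B, a => 0 ≤ a
  | XType.C, a => 0 ≤ a
  | XType.D, a => a = -1 ∨ 1 ≤ a

/-- `l ∈ H^X(w)`: a Hecke word for `w` of type `X`. -/
def HeckeWord (X : XType) (w : SPerm) (l : List ℤ) : Prop :=
  (∀ a ∈ l, allowedLetter X a) ∧ demFold X 1 l = w

/-- `o^X(a)`. -/
def oX : XType → List ℤ → ℕ
  | XType.B, l => l.count 0
  | XType.C, _ => 0
  | XType.D, l => l.count (-1) + l.count 1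

/-- `b ∈ C^X(a)`: a compatible sequence for the word `a`. -/
def CompatX (X : XType) (a : List ℤ) (b : List ℕ) : Prop :=
  b.length = a.length ∧ (∀ x ∈ b, 0 < x) ∧ b.Pairwise (· ≤ ·) ∧
  (∀ i : ℕ, 0 < i → i + 1 < a.length →
    |a.getD (i-1) 0| ≤ |a.getD i 0| → |a.getD (i+1) 0| ≤ |a.getD i 0| →
    b.getD (i-1) 0 < b.getD (i+1) 0) ∧
  (X = XType.B → ∀ i : ℕ, i + 1 < a.length → a.getD i 0 = 0 → a.getD (i+1) 0 = 0 →
    b.getD i 0 < b.getD (i+1) 0) ∧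
  (X = XType.D → ∀ i : ℕ, i + 1 < a.length →
    a.getD i 0 = a.getD (i+1) 0 → (a.getD i 0 = -1 ∨ a.getD i 0 = 1) →
    b.getD i 0 < b.getD (i+1) 0)

/-- `γ(a,b)`: the number of `i` with `a_i = a_{i+1}` and `b_i = b_{i+1}`. -/
def gammaC (a : List ℤ) (b : List ℕ) : ℕ :=
  (List.range (a.length - 1)).countP
    (fun i => decide (a.getD i 0 = a.getD (i+1) 0 ∧ b.getD i 0 = b.getD (i+1) 0))

/-- `ℤ[β]`, with `β = Polynomial.X`. -/
abbrev PolyB := Polynomial ℤ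

/-- The K-Stanley symmetric function `F^X_w(z) ∈ ℤ[β]⟦z_1,z_2,...⟧`
(the variable `z_i` has index `i ≥ 1`; index `0` is unused), defined
coefficientwise: the coefficient of a monomial is the (finite) sum of the
contributions `2^{|b|-γ(a,b)-o^X(a)} β^{ℓ(a)-ℓ^X(w)}` over all pairs of a
Hecke word `a ∈ H^X(w)` and compatible sequence `b ∈ C^X(a)` with `z_b`
equal to the monomial. -/
def KSF (X : XType) (w : SPerm) : MvPowerSeries ℕ PolyB :=
  fun d => ∑ᶠ (p : List ℤ × List ℕ)
    (_ : HeckeWord X w p.1 ∧ CompatX X p.1 p.2 ∧ ∀ k : ℕ, d k = p.2.count k),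
    (2 : PolyB) ^ (p.2.dedup.length - gammaC p.1 p.2 - oX X p.1) *
      Polynomial.X ^ (p.1.length - lenX X w)

/-- A signed permutation is Grassmannian if `w(1) < w(2) < ⋯`. -/
def IsGrassmannian (w : SPerm) : Prop := ∀ i : ℤ, 0 < i → w i < w (i + 1)

/-- The descent set `Des(w) = {i > 0 : w(i) > w(i+1)}` (as a set of naturals). -/
def DesSet (w : SPerm) : Set ℕ := {i : ℕ | 0 < i ∧ w ((i : ℤ) + 1) < w (i : ℤ)}

/-- The last descent `LD(w) = max({0} ∪ Des(w))`. -/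
def LD (w : SPerm) : ℕ := sSup (DesSet w)

/-- The partial order `≺_LD`. -/
def precLD (u w : SPerm) : Prop :=
  LD u < LD w ∨ (0 < LD u ∧ LD u = LD w ∧ u (LD u : ℤ) < w (LD w : ℤ))

/-- `IncSteps f u ts` : successive right multiplications of `u` by the
elements of `ts` each increase `f` by exactly one. -/
def IncSteps (f : SPerm → ℕ) : SPerm → List SPerm → Prop
  | _, [] => True
  | u, t :: ts => f (u * t) = f u + 1 ∧ IncSteps f (u * t) ts

/-! ## Strict partitions and K-theoretic Schur P- and Q-functions -/

section

/-- A strict partition, encoded as a strictly decreasing list of positive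
integers. -/
def StrictPart (l : List ℕ) : Prop := l.Pairwise (· > ·) ∧ ∀ x ∈ l, 0 < x

/-- A partition (weakly decreasing list of positive integers). -/
def Partn (l : List ℕ) : Prop := l.Pairwise (· ≥ ·) ∧ ∀ x ∈ l, 0 < x

/-- Membership of the (1-based) box `p = (i,j)` in the shifted diagram `SD_l`. -/
def inSD (l : List ℕ) (p : ℕ × ℕ) : Prop :=
  1 ≤ p.1 ∧ p.1 ≤ l.length ∧ p.1 ≤ p.2 ∧ p.2 < p.1 + l.getD (p.1 - 1) 0

/-- `mu ⊆ lam`, i.e. `SD_mu ⊆ SD_lam`. -/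
def subShape (mu lam : List ℕ) : Prop := ∀ p, inSD mu p → inSD lam p

/-- Membership in the skew shifted diagram `SD_{lam/mu}`. -/
def inSkew (lam mu : List ℕ) (p : ℕ × ℕ) : Prop := inSD lam p ∧ ¬ inSD mu p

/-- A set-valued shifted tableau of shape `lam/mu`:  a finite nonempty set of
letters in each box of the skew shape, the empty set elsewhere.  The primed
alphabet `1' < 1 < 2' < 2 < ⋯` is encoded in `ℕ` by `k ↦ 2k` and `k' ↦ 2k-1`
(so primed letters are odd codes, and the order on codes is the alphabet
order). -/
def IsSVT (lam mu : List ℕ) (T : ℕ × ℕ → Finset ℕ) : Prop :=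
  (∀ p, (T p).Nonempty ↔ inSkew lam mu p) ∧ (∀ p, ∀ v ∈ T p, 0 < v)

/-- Semistandardness of a set-valued shifted tableau. -/
def IsSSVT (lam mu : List ℕ) (T : ℕ × ℕ → Finset ℕ) : Prop :=
  IsSVT lam mu T ∧
  (∀ i j : ℕ, inSkew lam mu (i, j) → inSkew lam mu (i, j+1) →
    (∀ u ∈ T (i, j), ∀ v ∈ T (i, j+1), u ≤ v) ∧
    (∀ v ∈ T (i, j), v ∈ T (i, j+1) → Even v)) ∧
  (∀ i j : ℕ, inSkew lam mu (i, j) → inSkew lam mu (i+1, j) →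
    (∀ u ∈ T (i, j), ∀ v ∈ T (i+1, j), u ≤ v) ∧
    (∀ v ∈ T (i, j), v ∈ T (i+1, j) → Odd v))

/-- `|T|`: total number of letters in `T`. -/
def tabSize (T : ℕ × ℕ → Finset ℕ) : ℕ := ∑ᶠ p : ℕ × ℕ, (T p).card

/-- The exponent of `z_k` in `z^T`: the number of boxes containing the letter
`k` (code `2k`) plus the number containing `k'` (code `2k-1`). -/
def tabWt (T : ℕ × ℕ → Finset ℕ) (k : ℕ) : ℕ :=
  Set.ncard {p : ℕ × ℕ | 2 * k ∈ T p} + Set.ncard {p : ℕ × ℕ | 2 * k - 1 ∈ T p}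

/-- The K-theoretic Schur P-function `GP_{lam/mu}(z) ∈ ℤ[β]⟦z_1,z_2,...⟧`,
defined coefficientwise as a tableau generating function. -/
def GPs (lam mu : List ℕ) : MvPowerSeries ℕ PolyB :=
  fun d => ∑ᶠ (T : ℕ × ℕ → Finset ℕ)
    (_ : IsSSVT lam mu T ∧
      (∀ i : ℕ, inSkew lam mu (i, i) → ∀ v ∈ T (i, i), Even v) ∧
      (∀ k : ℕ, d k = tabWt T k)),
    (Polynomial.X : PolyB) ^ (tabSize T - (lam.sum - mu.sum))

/-- The K-theoretic Schur Q-function `GQ_{lam/mu}(z) ∈ ℤ[β]⟦z_1,z_2,...⟧`. -/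
def GQs (lam mu : List ℕ) : MvPowerSeries ℕ PolyB :=
  fun d => ∑ᶠ (T : ℕ × ℕ → Finset ℕ)
    (_ : IsSSVT lam mu T ∧ (∀ k : ℕ, d k = tabWt T k)),
    (Polynomial.X : PolyB) ^ (tabSize T - (lam.sum - mu.sum))

end

/-! ## Type A: the symmetric group and double Grothendieck polynomials

We identify `S_∞` (permutations of the positive integers with finite support)
with the subgroup `W^A_∞` of signed permutations preserving the positive
integers; under this identification the Coxeter length of type A equals
`ℓ^B`, and the transposition `(i,j)` of positive integers corresponds to
`tt i j`. -/

section

/-- Membership in `S_∞ = W^A_∞`. -/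
def IsAperm (w : SPerm) : Prop := IsSgn w ∧ ∀ i : ℤ, 0 < i → 0 < w i

/-- The type A Coxeter length. -/
def lenA (w : SPerm) : ℕ := lenX XType.B w

/-- The polynomial ring `ℤ[β][x_1,x_2,...,y_1,y_2,...]`:  the variable
`Sum.inl i` is `x_i` and `Sum.inr i` is `y_i` (for `i ≥ 1`; index 0 unused). -/
abbrev MvP := MvPolynomial (ℕ ⊕ ℕ) PolyB

def xV (i : ℕ) : MvP := MvPolynomial.X (Sum.inl i)
def yV (i : ℕ) : MvP := MvPolynomial.X (Sum.inr i)
def βM : MvP := MvPolynomial.C Polynomial.X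

/-- `w` is the reverse permutation `n ⋯ 3 2 1 ∈ S_n`. -/
def IsRevA (n : ℕ) (w : SPerm) : Prop :=
  IsAperm w ∧ (∀ i : ℤ, 1 ≤ i → i ≤ (n : ℤ) → w i = (n : ℤ) + 1 - i) ∧
  (∀ i : ℤ, (n : ℤ) < i → w i = i)

/-- Exchange of the variables `x_i` and `x_{i+1}`. -/
def swapXvar (i : ℕ) (f : MvP) : MvP :=
  MvPolynomial.rename (Equiv.swap (Sum.inl i : ℕ ⊕ ℕ) (Sum.inl (i+1))) f

/-- `G` is the family of double Grothendieck polynomials `𝔊_w(x;y)`: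
it takes the prescribed product value on each reverse permutation, and
satisfies the divided-difference recursion `𝔊_{w s_i} = π_i 𝔊_w` whenever
`w(i) > w(i+1)` (stated multiplied through by `x_i - x_{i+1}`). -/
def GrothFamily (G : SPerm → MvP) : Prop :=
  (∀ n : ℕ, ∀ w : SPerm, IsRevA n w →
    G w = ∏ p ∈ Finset.filter
        (fun p : ℕ × ℕ => 1 ≤ p.1 ∧ 1 ≤ p.2 ∧ p.1 + p.2 ≤ n)
        (Finset.range (n+1) ×ˢ Finset.range (n+1)),
      (xV p.1 + yV p.2 + βM * xV p.1 * yV p.2)) ∧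
  (∀ w : SPerm, IsAperm w → ∀ i : ℕ, 0 < i → w ((i : ℤ) + 1) < w (i : ℤ) →
    (xV i - xV (i+1)) * G (w * st (i : ℤ)) =
      (1 + βM * xV (i+1)) * G w - (1 + βM * xV i) * swapXvar i (G w))

/-! ## Power series rings -/

/-- `ℤ[β]⟦z⟧`. -/
abbrev PS1 := MvPowerSeries ℕ PolyB
/-- `ℤ[β]⟦x;y⟧`: `Sum.inl i = x_i`, `Sum.inr i = y_i`. -/
abbrev PS2 := MvPowerSeries (ℕ ⊕ ℕ) PolyB
/-- `ℤ[β]⟦x;y;z⟧`: `Sum.inl i = x_i`, `Sum.inr (Sum.inl i) = y_i`,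
`Sum.inr (Sum.inr i) = z_i`. -/
abbrev PS3 := MvPowerSeries (ℕ ⊕ ℕ ⊕ ℕ) PolyB

/-- Renaming of variables of a formal power series along a (variable-to-
variable, injective) map `g`. -/
def renamePS {σ τ : Type} (g : σ → τ) (f : MvPowerSeries σ PolyB) :
    MvPowerSeries τ PolyB :=
  fun e => if h : ∃ d : σ →₀ ℕ, Finsupp.mapDomain g d = e then f h.choose else 0

/-- The substitution sending `z_{2i-1}` to `z_i` (first alphabet) and
`z_{2i}` to `z'_i` (second alphabet): evaluation at the disjoint union of two
alphabets. -/
def dblVar : ℕ → ℕ ⊕ ℕ := fun k => if k % 2 = 1 then Sum.inl ((k+1)/2) else Sum.inr (k/2)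

def toPS2 : MvP →+* PS2 := MvPolynomial.coeToMvPowerSeries.ringHom
def X2 (i : ℕ) : PS2 := MvPowerSeries.X (Sum.inl i)
def Y2 (i : ℕ) : PS2 := MvPowerSeries.X (Sum.inr i)
def βC2 : PS2 := (MvPowerSeries.C : PolyB →+* MvPowerSeries (ℕ ⊕ ℕ) PolyB) Polynomial.X
/-- The inverse of `1 + β y_m` in `ℤ[β]⟦x;y⟧`. -/
def yInv2 (m : ℕ) : PS2 := MvPowerSeries.invOfUnit (1 + βC2 * Y2 m) 1

def X3 (i : ℕ) : PS3 := MvPowerSeries.X (Sum.inl i)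
def Y3 (i : ℕ) : PS3 := MvPowerSeries.X (Sum.inr (Sum.inl i))
def βC3 : PS3 := (MvPowerSeries.C : PolyB →+* MvPowerSeries (ℕ ⊕ ℕ ⊕ ℕ) PolyB) Polynomial.X
/-- The inverse of `1 + β y_m` in `ℤ[β]⟦x;y;z⟧`. -/
def yInv3 (m : ℕ) : PS3 := MvPowerSeries.invOfUnit (1 + βC3 * Y3 m) 1

/-- `y_c` for `c : ℤ`, with the convention `y_{-m} = -y_m/(1+βy_m)`. -/
def y3Of (c : ℤ) : PS3 :=
  if 0 ≤ c then Y3 c.toNat else - Y3 (-c).toNat * yInv3 (-c).toNat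

/-- `(1 + β y_c)⁻¹` for `c : ℤ` (with the convention above for `c < 0`). -/
def oneByInv3 (c : ℤ) : PS3 := MvPowerSeries.invOfUnit (1 + βC3 * y3Of c) 1

/-! ## Kirillov–Naruse double Grothendieck polynomials -/

/-- `𝔊_σ(y)`: the `x`-variables replaced by `y`'s, the `y`-variables set
to `0`, inside `ℤ[β]⟦x;y;z⟧`. -/
def GyMap : MvP →+* PS3 :=
  MvPolynomial.eval₂Hom (MvPowerSeries.C : PolyB →+* MvPowerSeries (ℕ ⊕ ℕ ⊕ ℕ) PolyB)
    (fun s => match s with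
      | Sum.inl i => Y3 i
      | Sum.inr _ => 0)

/-- `𝔊_τ(x)`: the `y`-variables set to `0`, inside `ℤ[β]⟦x;y;z⟧`. -/
def GxMap : MvP →+* PS3 :=
  MvPolynomial.eval₂Hom (MvPowerSeries.C : PolyB →+* MvPowerSeries (ℕ ⊕ ℕ ⊕ ℕ) PolyB)
    (fun s => match s with
      | Sum.inl i => X3 i
      | Sum.inr _ => 0)

/-- Embedding of `ℤ[β]⟦z⟧` into `ℤ[β]⟦x;y;z⟧`. -/
def zEmb (f : PS1) : PS3 := renamePS (fun k => Sum.inr (Sum.inr k)) f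

/-- `σ⁻¹ ∘ u ∘ τ = w` for the Demazure product of `W^X_∞` (computed by
folding Hecke words for `u` and `τ` starting from `σ⁻¹`; the result does not
depend on the chosen words). -/
def DemTriple (X : XType) (sg u tu w : SPerm) : Prop :=
  ∃ lu lt : List ℤ, HeckeWord X u lu ∧ HeckeWord X tu lt ∧
    demFold X sg⁻¹ (lu ++ lt) = w

/-- The Kirillov–Naruse double Grothendieck polynomial
`𝔊^X_w(x;y;z) = Σ_{σ⁻¹∘u∘τ = w} β^{ℓ(σ)+ℓ^X(u)+ℓ(τ)-ℓ^X(w)} 𝔊_σ(y) F^X_u(z) 𝔊_τ(x)`,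
defined coefficientwise (each coefficient receives finitely many
contributions); it depends on a choice `G` of the family of type A double
Grothendieck polynomials. -/
def KN (X : XType) (G : SPerm → MvP) (w : SPerm) : PS3 :=
  fun e => ∑ᶠ (t : SPerm × SPerm × SPerm)
    (_ : IsAperm t.1 ∧ IsW X t.2.1 ∧ IsAperm t.2.2 ∧ DemTriple X t.1 t.2.1 t.2.2 w),
    MvPowerSeries.coeff e
      ((MvPowerSeries.C : PolyB →+* MvPowerSeries (ℕ ⊕ ℕ ⊕ ℕ) PolyB)
          (Polynomial.X ^ (lenA t.1 + lenX X t.2.1 + lenA t.2.2 - lenX X w)) *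
        (GyMap (G t.1) * zEmb (KSF X t.2.1) * GxMap (G t.2.2)))

end

/-! ## Stable Grothendieck functions of type A -/

section

/-- A type A Hecke word: letters are positive, fold to `w` under the
Demazure product. -/
def HeckeWordA (w : SPerm) (l : List ℤ) : Prop :=
  (∀ a ∈ l, 0 < a) ∧ demFold XType.B 1 l = w

/-- `b ∈ C(a)`: compatible sequences of type A. -/
def CompatA (a : List ℤ) (b : List ℕ) : Prop :=
  b.length = a.length ∧ (∀ x ∈ b, 0 < x) ∧ b.Pairwise (· ≤ ·) ∧
  ∀ i : ℕ, i + 1 < a.length → a.getD i 0 ≤ a.getD (i+1) 0 →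
    b.getD i 0 < b.getD (i+1) 0

/-- The stable (symmetric) Grothendieck function `G_w(z)`. -/
def GA (w : SPerm) : PS1 :=
  fun d => ∑ᶠ (p : List ℤ × List ℕ)
    (_ : HeckeWordA w p.1 ∧ CompatA p.1 p.2 ∧ ∀ k : ℕ, d k = p.2.count k),
    (Polynomial.X : PolyB) ^ (p.1.length - lenA w)

/-- Demazure product condition `u ∘ v = w` in `S_∞`. -/
def DemPairA (u v w : SPerm) : Prop :=
  ∃ lv : List ℤ, HeckeWordA v lv ∧ demFold XType.B u lv = w

/-- `max({0} ∪ {i > 0 : u(i) ≠ i})`. -/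
def suppMax (u : SPerm) : ℕ := sSup {n : ℕ | 0 < n ∧ u (n : ℤ) ≠ (n : ℤ)}

end

/-! ## The coefficient ring 𝔸 (localization of ℤ[β][y] at the 1+βyᵢ) -/

section

/-- `ℤ[β][y_1,y_2,...]`. -/
abbrev Ry := MvPolynomial ℕ+ PolyB

/-- The multiplicative set generated by the `1 + β y_i`, `i ≥ 1`. -/
def Sy : Submonoid Ry :=
  Submonoid.closure
    (Set.range fun i : ℕ+ => (1 + MvPolynomial.C Polynomial.X * MvPolynomial.X i : Ry))

/-- The ring `𝔸`. -/
abbrev Aloc := Localization Sy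

/-- The polynomial ring `𝔸[x_1,x_2,...]`. -/
abbrev Ax := MvPolynomial ℕ+ Aloc

/-- The canonical map `ℤ[β][x;y] → 𝔸[x]`. -/
def toAx : MvP →+* Ax :=
  MvPolynomial.eval₂Hom
    ((MvPolynomial.C : Aloc →+* Ax).comp
      ((algebraMap Ry Aloc).comp (MvPolynomial.C : PolyB →+* Ry)))
    (fun s => match s with
      | Sum.inl i => if h : 0 < i then MvPolynomial.X (⟨i, h⟩ : ℕ+) else 0
      | Sum.inr i => if h : 0 < i then
          MvPolynomial.C (algebraMap Ry Aloc (MvPolynomial.X (⟨i, h⟩ : ℕ+))) else 0)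

/-- Homogeneity in `ℤ[β][y]` for the grading `deg β = -1`, `deg y_i = 1`. -/
def IsHomogRy (p : Ry) (d : ℤ) : Prop :=
  ∀ (m : ℕ+ →₀ ℕ) (a : ℕ), (MvPolynomial.coeff m p).coeff a ≠ 0 →
    (m.sum fun _ e => (e : ℤ)) - (a : ℤ) = d

/-- Homogeneity in `𝔸` of degree `d`: the element can be written with a
homogeneous numerator of degree `d` and a (degree zero) denominator in `Sy`. -/
def IsHomogA (x : Aloc) (d : ℤ) : Prop :=
  ∃ (p : Ry) (s : Sy), IsHomogRy p d ∧ IsHomogRy (s : Ry) 0 ∧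
    x * algebraMap Ry Aloc (s : Ry) = algebraMap Ry Aloc p

/-- The subring `𝔸^{(n)}` generated by `β`, by `y_1,…,y_{n-1}` and by the
inverses of `1+βy_1,…,1+βy_{n-1}`. -/
def AnSub (n : ℕ) : Subring Aloc :=
  Subring.closure
    ({algebraMap Ry Aloc (MvPolynomial.C Polynomial.X)} ∪
     {x | ∃ i : ℕ+, (i : ℕ) < n ∧ x = algebraMap Ry Aloc (MvPolynomial.X i)} ∪
     {x | ∃ i : ℕ+, (i : ℕ) < n ∧
        x * algebraMap Ry Aloc
          (1 + MvPolynomial.C Polynomial.X * MvPolynomial.X i : Ry) = 1})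

end

/-! ## Transition chains -/

section

/-- The list of reflections of a transition chain `γ = (δ; j_1 < ⋯ < j_r)`
with target column `k`: first (if `δ`) the reflection `t_{0,k}`, then the
reflections `t_{j_1,k}, …, t_{j_r,k}`. -/
def stepsR (k : ℕ) (γ : Bool × List ℤ) : List SPerm :=
  (if γ.1 then [tt 0 (k : ℤ)] else []) ++ γ.2.map (fun j => tt j (k : ℤ))

/-- Validity of the transition chain `γ = (δ; j_1 < ⋯ < j_r)` starting at
`w`, with target column `k`: `δ` only in type B, `j`'s increasing and `< k`,
`j_i ≠ -k`, `j_i ≠ 0` in type D, and each step increases `ℓ^X` by one. -/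
def chainValidR (X : XType) (w : SPerm) (k : ℕ) (γ : Bool × List ℤ) : Prop :=
  (γ.1 = true → X = XType.B) ∧ γ.2.Pairwise (· < ·) ∧
  (∀ j ∈ γ.2, j < (k : ℤ) ∧ j ≠ -(k : ℤ) ∧ (X = XType.D → j ≠ 0)) ∧
  IncSteps (lenX X) w (stepsR k γ)

/-- The endpoint of a chain. -/
def endR (w : SPerm) (k : ℕ) (γ : Bool × List ℤ) : SPerm := w * (stepsR k γ).prod

/-- The number of steps `δ + r` of a chain. -/
def lenR (γ : Bool × List ℤ) : ℕ := (if γ.1 then 1 else 0) + γ.2.length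

end

/-! ## Unimodal factorizations -/

section

/-- `b ∈ U(a)`: unimodal factorizations of the word `a`. -/
def UFact (a b : List ℤ) : Prop :=
  b.length = a.length ∧ (∀ x ∈ b, x ≠ 0) ∧
  b.Pairwise (fun m n => |m| < |n| ∨ (|m| = |n| ∧ m ≤ n)) ∧
  ∀ i : ℕ, i + 1 < b.length → b.getD i 0 = b.getD (i+1) 0 →
    (b.getD i 0 < 0 → |a.getD (i+1) 0| < |a.getD i 0|) ∧
    (0 < b.getD i 0 → |a.getD i 0| < |a.getD (i+1) 0|)

/-- `b ∈ U^X(a)`. -/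
def UFactX (X : XType) (a b : List ℤ) : Prop :=
  UFact a b ∧
  (X = XType.B → ∀ i : ℕ, i < b.length → a.getD i 0 = 0 → 0 < b.getD i 0) ∧
  (X = XType.D → ∀ i : ℕ, i < b.length →
    (a.getD i 0 = -1 ∨ a.getD i 0 = 1) → 0 < b.getD i 0)

end

/-! ## Reading words of skew shifted shapes -/

section

/-- The row-by-row reading word of the filling of `SD_{lam/mu}` placing
`j - i` in box `(i,j)`. -/
def aWord (lam mu : List ℕ) : List ℤ :=
  (List.range lam.length).flatMap (fun r =>
    (List.range (lam.getD r 0 - mu.getD r 0)).map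
      (fun s => ((mu.getD r 0 + s : ℕ) : ℤ)))

/-- The row-by-row reading word of the filling of `SD_{lam/mu}` placing
`j - i + 1` in each box `(i,j)` with `i ≠ j` and `(-1)^i` in each diagonal
box `(i,i)`. -/
def bWord (lam mu : List ℕ) : List ℤ :=
  (List.range lam.length).flatMap (fun r =>
    (List.range (lam.getD r 0 - mu.getD r 0)).map
      (fun s => if mu.getD r 0 + s = 0 then (-1 : ℤ) ^ (r + 1)
        else ((mu.getD r 0 + s : ℕ) : ℤ) + 1))

end

end
abbrev SymW (w : SPerm) : Prop := ∀ i : ℤ, w (-i) = -(w i)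
abbrev Win (w : SPerm) (R : ℕ) : Prop := ∀ i : ℤ, (R:ℤ) < |i| → w i = i
abbrev Inc (w : SPerm) (c : ℤ) : Prop := ∀ i : ℤ, c ≤ i → w i < w (i+1)

lemma sym_mul {w t : SPerm} (hw : SymW w) (ht : SymW t) : SymW (w * t) := fun i => by
  simp only [Equiv.Perm.mul_apply, ht i, hw (t i)]

lemma absZ (a : ℤ) : (|a| = a ∧ 0 ≤ a) ∨ (|a| = -a ∧ a < 0) := abs_cases a

lemma sym_zero {w : SPerm} (hw : SymW w) : w 0 = 0 := by
  have h := hw 0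
  simp only [neg_zero] at h
  omega

lemma win_mono {w : SPerm} {R S : ℕ} (h : Win w R) (hRS : R ≤ S) : Win w S := by
  intro i hi
  refine h i ?_
  have : (R:ℤ) ≤ S := by exact_mod_cast hRS
  linarith

lemma win_bound {w : SPerm} {R : ℕ} (h : Win w R) {i : ℤ} (hi : |i| ≤ R) : |w i| ≤ R := by
  by_contra hc
  push_neg at hc
  have h2 := h (w i) hc
  have h3 : w i = i := w.injective h2
  rw [h3] at hc
  omega

section ttlem
variable {j k : ℤ} (hj0 : j ≠ 0) (hk0 : k ≠ 0) (hjk : j ≠ k) (hjnk : j ≠ -k)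

lemma tt_eq (hj0 : j ≠ 0) (hk0 : k ≠ 0) (hjk : j ≠ k) (hjnk : j ≠ -k) : tt j k = Equiv.swap j k * Equiv.swap (-j) (-k) := by
  rw [tt, if_neg hj0, if_neg hk0, if_neg (by push_neg; exact ⟨hjk, hjnk⟩)]

lemma tt_apply_ne (hj0 : j ≠ 0) (hk0 : k ≠ 0) (hjk : j ≠ k) (hjnk : j ≠ -k) {x : ℤ} (h1 : x ≠ j) (h2 : x ≠ k) (h3 : x ≠ -j) (h4 : x ≠ -k) :
    tt j k x = x := by
  rw [tt_eq hj0 hk0 hjk hjnk]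
  have hh : Equiv.swap (-j) (-k) x = x := Equiv.swap_apply_of_ne_of_ne h3 h4
  simp only [Equiv.Perm.mul_apply, hh, Equiv.swap_apply_of_ne_of_ne h1 h2]

lemma tt_apply_j (hj0 : j ≠ 0) (hk0 : k ≠ 0) (hjk : j ≠ k) (hjnk : j ≠ -k) : tt j k j = k := by
  rw [tt_eq hj0 hk0 hjk hjnk]
  have h1 : Equiv.swap (-j) (-k) j = j := Equiv.swap_apply_of_ne_of_ne (by omega) hjnk
  simp only [Equiv.Perm.mul_apply, h1, Equiv.swap_apply_left]

lemma tt_apply_k (hj0 : j ≠ 0) (hk0 : k ≠ 0) (hjk : j ≠ k) (hjnk : j ≠ -k) : tt j k k = j := by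
  rw [tt_eq hj0 hk0 hjk hjnk]
  have h1 : Equiv.swap (-j) (-k) k = k := Equiv.swap_apply_of_ne_of_ne (by omega) (by omega)
  simp only [Equiv.Perm.mul_apply, h1, Equiv.swap_apply_right]

lemma tt_apply_nj (hj0 : j ≠ 0) (hk0 : k ≠ 0) (hjk : j ≠ k) (hjnk : j ≠ -k) : tt j k (-j) = -k := by
  rw [tt_eq hj0 hk0 hjk hjnk]
  have h1 : Equiv.swap (-j) (-k) (-j) = -k := Equiv.swap_apply_left _ _
  have h2 : Equiv.swap j k (-k) = -k := Equiv.swap_apply_of_ne_of_ne (by omega) (by omega)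
  simp only [Equiv.Perm.mul_apply, h1, h2]

lemma tt_apply_nk (hj0 : j ≠ 0) (hk0 : k ≠ 0) (hjk : j ≠ k) (hjnk : j ≠ -k) : tt j k (-k) = -j := by
  rw [tt_eq hj0 hk0 hjk hjnk]
  have h1 : Equiv.swap (-j) (-k) (-k) = -j := Equiv.swap_apply_right _ _
  have h2 : Equiv.swap j k (-j) = -j := Equiv.swap_apply_of_ne_of_ne (by omega) (by omega)
  simp only [Equiv.Perm.mul_apply, h1, h2]

lemma tt_sym (hj0 : j ≠ 0) (hk0 : k ≠ 0) (hjk : j ≠ k) (hjnk : j ≠ -k) : SymW (tt j k) := by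
  have haj := tt_apply_j hj0 hk0 hjk hjnk
  have hak := tt_apply_k hj0 hk0 hjk hjnk
  have hanj := tt_apply_nj hj0 hk0 hjk hjnk
  have hank := tt_apply_nk hj0 hk0 hjk hjnk
  intro i
  by_cases h1 : i = j
  · subst h1; rw [hanj, haj]
  · by_cases h2 : i = k
    · subst h2; rw [hank, hak]
    · by_cases h3 : i = -j
      · subst h3; rw [neg_neg, haj, hanj, neg_neg]
      · by_cases h4 : i = -k
        · subst h4; rw [neg_neg, hak, hank, neg_neg]
        · rw [tt_apply_ne hj0 hk0 hjk hjnk h1 h2 h3 h4,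
            tt_apply_ne hj0 hk0 hjk hjnk (by omega) (by omega) (by omega) (by omega)]

lemma tt_invol (hj0 : j ≠ 0) (hk0 : k ≠ 0) (hjk : j ≠ k) (hjnk : j ≠ -k) :
    ∀ x, tt j k (tt j k x) = x := by
  have haj := tt_apply_j hj0 hk0 hjk hjnk
  have hak := tt_apply_k hj0 hk0 hjk hjnk
  have hanj := tt_apply_nj hj0 hk0 hjk hjnk
  have hank := tt_apply_nk hj0 hk0 hjk hjnk
  intro x
  by_cases h1 : x = j
  · subst h1; rw [haj, hak]
  · by_cases h2 : x = k
    · subst h2; rw [hak, haj]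
    · by_cases h3 : x = -j
      · subst h3; rw [hanj, hank]
      · by_cases h4 : x = -k
        · subst h4; rw [hank, hanj]
        · rw [tt_apply_ne hj0 hk0 hjk hjnk h1 h2 h3 h4,
            tt_apply_ne hj0 hk0 hjk hjnk h1 h2 h3 h4]

lemma tt_sq (hj0 : j ≠ 0) (hk0 : k ≠ 0) (hjk : j ≠ k) (hjnk : j ≠ -k) :
    tt j k * tt j k = 1 := by
  ext x
  simp only [Equiv.Perm.mul_apply, Equiv.Perm.one_apply]
  exact tt_invol hj0 hk0 hjk hjnk x

end ttlem

lemma tt_zero {k : ℤ} : tt 0 k = Equiv.swap (-k) k := by simp [tt]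

noncomputable def wWin (R : ℕ) : Finset ℤ := Finset.Icc (-(R:ℤ)) R

lemma mem_wWin {R : ℕ} {a : ℤ} : a ∈ wWin R ↔ |a| ≤ R := by
  simp [wWin, Finset.mem_Icc, abs_le]

lemma invP_eq_card {w : SPerm} {R : ℕ} (hw : Win w R) :
    invP w = (((wWin R) ×ˢ (wWin R)).filter
      (fun p : ℤ × ℤ => p.1 < p.2 ∧ w p.2 < w p.1)).card := by
  rw [invP, ← Set.ncard_coe_finset]
  congr 1
  ext ⟨i, j⟩
  simp only [Set.mem_setOf_eq, Finset.coe_filter, Finset.mem_product, mem_wWin]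
  constructor
  · rintro ⟨hij, hinv⟩
    have hi : |i| ≤ (R:ℤ) := by
      by_contra hci
      push_neg at hci
      have hwi : w i = i := hw i hci
      rcases absZ i with ⟨hai, hai2⟩ | ⟨hai, hai2⟩
      · have hj' : (R:ℤ) < |j| := by rcases absZ j with ⟨haj, haj2⟩ | ⟨haj, haj2⟩ <;> omega
        have hwj : w j = j := hw j hj'
        omega
      · rcases le_or_gt (|j|) (R:ℤ) with hj' | hj'
        · have hb := win_bound hw hj'
          rcases absZ (w j) with ⟨hc, hc2⟩ | ⟨hc, hc2⟩ <;> omega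
        · have hwj : w j = j := hw j hj'
          rcases absZ j with ⟨haj, haj2⟩ | ⟨haj, haj2⟩ <;> omega
    have hj : |j| ≤ (R:ℤ) := by
      by_contra hcj
      push_neg at hcj
      have hwj : w j = j := hw j hcj
      have hwi := win_bound hw hi
      rcases absZ (w i) with ⟨h1, h1a⟩ | ⟨h1, h1a⟩ <;> rcases absZ j with ⟨h2, h2a⟩ | ⟨h2, h2a⟩ <;>
        rcases absZ i with ⟨h3, h3a⟩ | ⟨h3, h3a⟩ <;> omega
    exact ⟨⟨hi, hj⟩, hij, hinv⟩
  · rintro ⟨_, h⟩; exact h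

lemma negCount_eq_card {w : SPerm} {R : ℕ} (hw : Win w R) :
    negCount w = ((Finset.Icc (1:ℤ) R).filter (fun i => w i < 0)).card := by
  rw [negCount, ← Set.ncard_coe_finset]
  congr 1
  ext i
  simp only [Set.mem_setOf_eq, Finset.coe_filter, Finset.mem_Icc]
  constructor
  · rintro ⟨hi, hneg⟩
    have : i ≤ R := by
      by_contra hc
      push_neg at hc
      have : w i = i := hw i (by rcases absZ i with ⟨h, ha⟩ | ⟨h, ha⟩ <;> omega)
      omega
    exact ⟨⟨by omega, this⟩, hneg⟩
  · rintro ⟨⟨h1, _⟩, h⟩; exact ⟨by omega, h⟩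

lemma win_mul_swap {w : SPerm} {R : ℕ} (hw : Win w R) {a b : ℤ}
    (ha : |a| ≤ R) (hb : |b| ≤ R) : Win (w * Equiv.swap a b) R := by
  intro i hi
  have hia : i ≠ a := by rintro rfl; omega
  have hib : i ≠ b := by rintro rfl; omega
  simp only [Equiv.Perm.mul_apply, Equiv.swap_apply_of_ne_of_ne hia hib]
  exact hw i hi

set_option maxHeartbeats 1600000 in
lemma swap_invP {w : SPerm} {R : ℕ} (hw : Win w R) {a b : ℤ}
    (hab : a < b) (ha : |a| ≤ R) (hb : |b| ≤ R) (hv : w a < w b) :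
    invP (w * Equiv.swap a b) =
      invP w + 1 + 2 * ((Finset.Ioo a b).filter (fun h => w a < w h ∧ w h < w b)).card := by
  set w' := w * Equiv.swap a b with hw'def
  have hw' : Win w' R := win_mul_swap hw ha hb
  have hwa : w' a = w b := by simp [hw'def, Equiv.Perm.mul_apply]
  have hwb : w' b = w a := by simp [hw'def, Equiv.Perm.mul_apply]
  have hwx : ∀ x, x ≠ a → x ≠ b → w' x = w x := by
    intro x h1 h2
    simp [hw'def, Equiv.Perm.mul_apply, Equiv.swap_apply_of_ne_of_ne h1 h2]
  rw [invP_eq_card hw, invP_eq_card hw']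
  set I := wWin R with hI
  have haI : a ∈ I := mem_wWin.2 ha
  have hbI : b ∈ I := mem_wWin.2 hb
  set χ : SPerm → ℤ → ℤ → ℤ := fun u x y => if x < y ∧ u y < u x then 1 else 0 with hχ
  have cardeq : ∀ u : SPerm, (((I ×ˢ I).filter
      (fun p : ℤ × ℤ => p.1 < p.2 ∧ u p.2 < u p.1)).card : ℤ)
      = ∑ x ∈ I, ∑ y ∈ I, χ u x y := by
    intro u
    rw [Finset.card_filter]
    push_cast
    rw [Finset.sum_product]
  -- the key computation
  set M := ((Finset.Ioo a b).filter (fun h => w a < w h ∧ w h < w b)).card with hM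
  have key : ∑ x ∈ I, ∑ y ∈ I, χ w' x y = (∑ x ∈ I, ∑ y ∈ I, χ w x y) + 1 + 2 * M := by
    have hsub : ({a, b} : Finset ℤ) ⊆ I := by
      intro x hx
      simp only [Finset.mem_insert, Finset.mem_singleton] at hx
      rcases hx with rfl | rfl <;> assumption
    have hanb : a ≠ b := ne_of_lt hab
    -- split inner sums
    have inner : ∀ u : SPerm, ∀ x : ℤ, ∑ y ∈ I, χ u x y
        = ∑ y ∈ I \ {a, b}, χ u x y + (χ u x a + χ u x b) := by
      intro u x
      rw [← Finset.sum_sdiff hsub, Finset.sum_pair hanb]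
    have outer : ∀ f : ℤ → ℤ, ∑ x ∈ I, f x = ∑ x ∈ I \ {a, b}, f x + (f a + f b) := by
      intro f
      rw [← Finset.sum_sdiff hsub, Finset.sum_pair hanb]
    rw [outer (fun x => ∑ y ∈ I, χ w' x y), outer (fun x => ∑ y ∈ I, χ w x y)]
    simp only [inner]
    have hmem : ∀ x ∈ I \ ({a, b} : Finset ℤ), x ≠ a ∧ x ≠ b := by
      intro x hx
      simp only [Finset.mem_sdiff, Finset.mem_insert, Finset.mem_singleton] at hx
      exact ⟨fun h => hx.2 (Or.inl h), fun h => hx.2 (Or.inr h)⟩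
    -- untouched double sum equal
    have huntouched : ∑ x ∈ I \ ({a, b} : Finset ℤ), ∑ y ∈ I \ ({a, b} : Finset ℤ), χ w' x y
        = ∑ x ∈ I \ ({a, b} : Finset ℤ), ∑ y ∈ I \ ({a, b} : Finset ℤ), χ w x y := by
      refine Finset.sum_congr rfl (fun x hx => Finset.sum_congr rfl (fun y hy => ?_))
      simp only [hχ]
      rw [hwx x (hmem x hx).1 (hmem x hx).2, hwx y (hmem y hy).1 (hmem y hy).2]
    have eaa' : χ w' a a = 0 := by simp only [hχ]; rw [if_neg (by omega)]
    have eaa : χ w a a = 0 := by simp only [hχ]; rw [if_neg (by omega)]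
    have ebb' : χ w' b b = 0 := by simp only [hχ]; rw [if_neg (by omega)]
    have ebb : χ w b b = 0 := by simp only [hχ]; rw [if_neg (by omega)]
    have eba' : χ w' b a = 0 := by simp only [hχ]; rw [if_neg (by omega)]
    have eba : χ w b a = 0 := by simp only [hχ]; rw [if_neg (by omega)]
    have eab' : χ w' a b = 1 := by
      simp only [hχ]; rw [hwa, hwb, if_pos ⟨hab, hv⟩]
    have eab : χ w a b = 0 := by
      simp only [hχ]; rw [if_neg (by omega)]
    -- the combined middle sum
    have main : ∑ x ∈ I \ ({a, b} : Finset ℤ),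
          (χ w' x a + χ w' x b + (χ w' a x + χ w' b x))
        = (∑ x ∈ I \ ({a, b} : Finset ℤ),
          (χ w x a + χ w x b + (χ w a x + χ w b x))) + 2 * (M:ℤ) := by
      have hpt : ∀ x ∈ I \ ({a, b} : Finset ℤ),
          χ w' x a + χ w' x b + (χ w' a x + χ w' b x)
          = χ w x a + χ w x b + (χ w a x + χ w b x)
            + (if a < x ∧ x < b ∧ w a < w x ∧ w x < w b then (2:ℤ) else 0) := by
        intro x hx
        obtain ⟨hxa, hxb⟩ := hmem x hx
        have hva : w x ≠ w a := fun h => hxa (w.injective h)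
        have hvb : w x ≠ w b := fun h => hxb (w.injective h)
        simp only [hχ]
        rw [hwa, hwb, hwx x hxa hxb]
        split_ifs <;> omega
      rw [Finset.sum_congr rfl hpt, Finset.sum_add_distrib]
      congr 1
      rw [Finset.sum_ite, Finset.sum_const, Finset.sum_const_zero, add_zero, nsmul_eq_mul]
      have hfe : (I \ ({a, b} : Finset ℤ)).filter
            (fun x => a < x ∧ x < b ∧ w a < w x ∧ w x < w b)
          = (Finset.Ioo a b).filter (fun h => w a < w h ∧ w h < w b) := by
        ext x
        simp only [hI, Finset.mem_filter, Finset.mem_sdiff, Finset.mem_insert,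
          Finset.mem_singleton, Finset.mem_Ioo, mem_wWin]
        constructor
        · rintro ⟨_, h1, h2, h3, h4⟩; exact ⟨⟨h1, h2⟩, h3, h4⟩
        · rintro ⟨⟨h1, h2⟩, h3, h4⟩
          refine ⟨⟨?_, ?_⟩, h1, h2, h3, h4⟩
          · rcases absZ x with ⟨e, e2⟩ | ⟨e, e2⟩ <;> rcases absZ a with ⟨f, f2⟩ | ⟨f, f2⟩ <;>
              rcases absZ b with ⟨g, g2⟩ | ⟨g, g2⟩ <;> omega
          · omega
      rw [hfe]
      push_cast
      ring
    -- assemble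
    simp only [Finset.sum_add_distrib] at main
    simp only [Finset.sum_add_distrib]
    rw [huntouched]
    rw [eaa', eaa, ebb', ebb, eba', eba, eab', eab]
    omega
  have hfin : ((((I ×ˢ I).filter
        (fun p : ℤ × ℤ => p.1 < p.2 ∧ w' p.2 < w' p.1)).card : ℤ))
      = (((I ×ˢ I).filter
        (fun p : ℤ × ℤ => p.1 < p.2 ∧ w p.2 < w p.1)).card : ℤ) + 1 + 2 * (M:ℤ) := by
    rw [cardeq w', cardeq w, key]
  exact_mod_cast hfin


lemma negCount_diff {w w' : SPerm} {R : ℕ} (hw : Win w R) (hw' : Win w' R)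
    (s : Finset ℤ) (hs : s ⊆ Finset.Icc 1 (R:ℤ))
    (hsame : ∀ i ∈ Finset.Icc (1:ℤ) (R:ℤ), i ∉ s → w' i = w i) :
    (negCount w' : ℤ) - negCount w
      = ∑ i ∈ s, ((if w' i < 0 then (1:ℤ) else 0) - (if w i < 0 then 1 else 0)) := by
  rw [negCount_eq_card hw, negCount_eq_card hw', Finset.card_filter, Finset.card_filter]
  push_cast
  rw [← Finset.sum_sub_distrib]
  refine (Finset.sum_subset hs (fun i hi his => ?_)).symm
  rw [hsame i hi his, sub_self]

lemma invP_decomp {w : SPerm} {R : ℕ} (hw : Win w R) (hsym : SymW w) :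
    ∃ p : ℕ, invP w = 2 * p + negCount w := by
  rw [invP_eq_card hw, negCount_eq_card hw]
  set U := (wWin R) ×ˢ (wWin R) with hU
  set S := U.filter (fun p : ℤ × ℤ => p.1 < p.2 ∧ w p.2 < w p.1) with hS
  have h1 : (S.filter (fun p : ℤ × ℤ => 0 < p.1 + p.2)).card
      + (S.filter (fun p : ℤ × ℤ => ¬ 0 < p.1 + p.2)).card = S.card :=
    Finset.card_filter_add_card_filter_not _
  have h2 : ((S.filter (fun p : ℤ × ℤ => ¬ 0 < p.1 + p.2)).filter
        (fun p : ℤ × ℤ => p.1 + p.2 < 0)).card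
      + ((S.filter (fun p : ℤ × ℤ => ¬ 0 < p.1 + p.2)).filter
        (fun p : ℤ × ℤ => ¬ p.1 + p.2 < 0)).card
      = (S.filter (fun p : ℤ × ℤ => ¬ 0 < p.1 + p.2)).card :=
    Finset.card_filter_add_card_filter_not _
  have e1 : (S.filter (fun p : ℤ × ℤ => ¬ 0 < p.1 + p.2)).filter
        (fun p : ℤ × ℤ => p.1 + p.2 < 0)
      = S.filter (fun p : ℤ × ℤ => p.1 + p.2 < 0) := by
    ext p
    simp only [Finset.mem_filter]
    constructor
    · rintro ⟨⟨ha, hb⟩, hc⟩; exact ⟨ha, hc⟩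
    · rintro ⟨ha, hc⟩; exact ⟨⟨ha, by omega⟩, hc⟩
  have e2 : (S.filter (fun p : ℤ × ℤ => ¬ 0 < p.1 + p.2)).filter
        (fun p : ℤ × ℤ => ¬ p.1 + p.2 < 0)
      = S.filter (fun p : ℤ × ℤ => p.1 + p.2 = 0) := by
    ext p
    simp only [Finset.mem_filter]
    constructor
    · rintro ⟨⟨ha, hb⟩, hc⟩; exact ⟨ha, by omega⟩
    · rintro ⟨ha, hc⟩; exact ⟨⟨ha, by omega⟩, by omega⟩
  rw [e1, e2] at h2
  -- memberships of S
  have hmemS : ∀ p : ℤ × ℤ, p ∈ S ↔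
      (|p.1| ≤ (R:ℤ) ∧ |p.2| ≤ (R:ℤ)) ∧ p.1 < p.2 ∧ w p.2 < w p.1 := by
    intro p
    rw [hS, hU, Finset.mem_filter, Finset.mem_product, mem_wWin, mem_wWin]
  -- bijection between negative and positive parts
  have hmemmap : ∀ p : ℤ × ℤ, p ∈ S → ((-p.2, -p.1) : ℤ × ℤ) ∈ S := by
    intro p hp
    rw [hmemS] at hp
    obtain ⟨⟨ha1, ha2⟩, hlt, hinv⟩ := hp
    rw [hmemS]
    refine ⟨⟨?_, ?_⟩, ?_, ?_⟩
    · show |(-p.2 : ℤ)| ≤ (R:ℤ); rw [abs_neg]; exact ha2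
    · show |(-p.1 : ℤ)| ≤ (R:ℤ); rw [abs_neg]; exact ha1
    · show -p.2 < -p.1; omega
    · show w (-p.1) < w (-p.2)
      rw [hsym p.1, hsym p.2]
      omega
  have hbij : (S.filter (fun p : ℤ × ℤ => p.1 + p.2 < 0)).card
      = (S.filter (fun p : ℤ × ℤ => 0 < p.1 + p.2)).card := by
    apply Finset.card_bij' (fun p _ => (-p.2, -p.1)) (fun p _ => (-p.2, -p.1))
    case hi =>
      intro p hp
      rw [Finset.mem_filter] at hp ⊢
      refine ⟨hmemmap p hp.1, ?_⟩
      have := hp.2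
      show 0 < -p.2 + -p.1
      omega
    case hj =>
      intro p hp
      rw [Finset.mem_filter] at hp ⊢
      refine ⟨hmemmap p hp.1, ?_⟩
      have := hp.2
      show -p.2 + -p.1 < 0
      omega
    case left_inv => intro p _; simp
    case right_inv => intro p _; simp
  -- zero part is negCount
  have hzero : (S.filter (fun p : ℤ × ℤ => p.1 + p.2 = 0)).card
      = ((Finset.Icc (1:ℤ) (R:ℤ)).filter (fun i => w i < 0)).card := by
    apply Finset.card_bij' (fun p _ => p.2) (fun i _ => (-i, i))
    case hi =>
      intro p hp
      rw [Finset.mem_filter] at hp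
      obtain ⟨hp1, hp2⟩ := hp
      rw [hmemS] at hp1
      obtain ⟨⟨ha1, ha2⟩, hlt, hinv⟩ := hp1
      have hp1e : p.1 = -p.2 := by omega
      rw [hp1e, hsym p.2] at hinv
      rw [Finset.mem_filter, Finset.mem_Icc]
      rcases absZ p.2 with ⟨e, e2⟩ | ⟨e, e2⟩ <;> exact ⟨⟨by omega, by omega⟩, by omega⟩
    case hj =>
      intro i hi
      rw [Finset.mem_filter, Finset.mem_Icc] at hi
      rw [Finset.mem_filter]
      constructor
      · rw [hmemS]
        refine ⟨⟨?_, ?_⟩, ?_, ?_⟩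
        · show |(-i : ℤ)| ≤ (R:ℤ)
          rw [abs_neg]; rcases absZ i with ⟨e, e2⟩ | ⟨e, e2⟩ <;> omega
        · show |i| ≤ (R:ℤ)
          rcases absZ i with ⟨e, e2⟩ | ⟨e, e2⟩ <;> omega
        · show -i < i; omega
        · show w i < w (-i)
          rw [hsym i]
          omega
      · show -i + i = 0; omega
    case left_inv =>
      intro p hp
      rw [Finset.mem_filter] at hp
      have hpe : p.1 = -p.2 := by omega
      show (-p.2, p.2) = p
      rw [← hpe]
    case right_inv => intro i _; simp
  exact ⟨(S.filter (fun p : ℤ × ℤ => 0 < p.1 + p.2)).card, by omega⟩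

lemma win_mul_tt {w : SPerm} {R : ℕ} (hw : Win w R) {j k : ℤ}
    (hj0 : j ≠ 0) (hk0 : k ≠ 0) (hjk : j ≠ k) (hjnk : j ≠ -k)
    (hja : |j| ≤ (R:ℤ)) (hka : |k| ≤ (R:ℤ)) : Win (w * tt j k) R := by
  intro i hi
  have h1 : i ≠ j := by rintro rfl; omega
  have h2 : i ≠ k := by rintro rfl; omega
  have h3 : i ≠ -j := by rintro rfl; rw [abs_neg] at hi; omega
  have h4 : i ≠ -k := by rintro rfl; rw [abs_neg] at hi; omega
  simp only [Equiv.Perm.mul_apply, tt_apply_ne hj0 hk0 hjk hjnk h1 h2 h3 h4]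
  exact hw i hi

set_option maxHeartbeats 1600000 in
lemma tt_step {w : SPerm} {R : ℕ} (hw : Win w R) (hsym : SymW w)
    {j k : ℤ} (hjk : j < k) (hk1 : 1 ≤ k) (hj0 : j ≠ 0) (hjnk : j ≠ -k)
    (hja : |j| ≤ (R:ℤ)) (hka : |k| ≤ (R:ℤ)) (hAB : w j < w k) :
    ∃ N2 ε : ℕ, ε ≤ 1
      ∧ invP (w * tt j k) = invP w + 2
        + 2 * ((Finset.Ioo j k).filter (fun h => w j < w h ∧ w h < w k)).card + 2 * N2
      ∧ negCount (w * tt j k) = negCount w + 2 * ε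
      ∧ (ε ≠ 0 → 1 ≤ N2 ∧
          1 ≤ ((Finset.Ioo j k).filter (fun h => w j < w h ∧ w h < w k)).card) := by
  have hk0 : k ≠ 0 := by omega
  have hjkne : j ≠ k := ne_of_lt hjk
  have w0 : w 0 = 0 := sym_zero hsym
  have hwj0 : w j ≠ 0 := fun h => hj0 (w.injective (by rw [h, w0]))
  have hwk0 : w k ≠ 0 := fun h => hk0 (w.injective (by rw [h, w0]))
  -- values of w * tt j k
  have hvj : (w * tt j k) j = w k := by
    simp only [Equiv.Perm.mul_apply, tt_apply_j hj0 hk0 hjkne hjnk]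
  have hvk : (w * tt j k) k = w j := by
    simp only [Equiv.Perm.mul_apply, tt_apply_k hj0 hk0 hjkne hjnk]
  have hvnj : (w * tt j k) (-j) = w (-k) := by
    simp only [Equiv.Perm.mul_apply, tt_apply_nj hj0 hk0 hjkne hjnk]
  have hvne : ∀ x : ℤ, x ≠ j → x ≠ k → x ≠ -j → x ≠ -k → (w * tt j k) x = w x := by
    intro x h1 h2 h3 h4
    simp only [Equiv.Perm.mul_apply, tt_apply_ne hj0 hk0 hjkne hjnk h1 h2 h3 h4]
  have hwt : Win (w * tt j k) R := win_mul_tt hw hj0 hk0 hjkne hjnk hja hka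
  -- invP computation via two swaps
  have hsw1 := swap_invP hw hjk hja hka hAB
  set w1 := w * Equiv.swap j k with hw1def
  have hw1win : Win w1 R := win_mul_swap hw hja hka
  have hv1 : w1 (-k) = -(w k) := by
    have h1 : (-k) ≠ j := by omega
    have h2 : (-k) ≠ k := by omega
    simp only [hw1def, Equiv.Perm.mul_apply, Equiv.swap_apply_of_ne_of_ne h1 h2, hsym k]
  have hv2 : w1 (-j) = -(w j) := by
    have h1 : (-j) ≠ j := by omega
    have h2 : (-j) ≠ k := by omega
    simp only [hw1def, Equiv.Perm.mul_apply, Equiv.swap_apply_of_ne_of_ne h1 h2, hsym j]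
  have hnk : -k < -j := by omega
  have hnka : |(-k)| ≤ (R:ℤ) := by rw [abs_neg]; exact hka
  have hnja : |(-j)| ≤ (R:ℤ) := by rw [abs_neg]; exact hja
  have hsw2 := swap_invP hw1win hnk hnka hnja (by rw [hv1, hv2]; omega)
  have hwtw : w * tt j k = w1 * Equiv.swap (-k) (-j) := by
    rw [tt_eq hj0 hk0 hjkne hjnk, ← mul_assoc, ← hw1def, Equiv.swap_comm]
  set N2 := ((Finset.Ioo (-k) (-j)).filter
      (fun h => w1 (-k) < w1 h ∧ w1 h < w1 (-j))).card with hN2def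
  have hinv : invP (w * tt j k) = invP w + 2
      + 2 * ((Finset.Ioo j k).filter (fun h => w j < w h ∧ w h < w k)).card + 2 * N2 := by
    rw [hwtw, hsw2, hsw1]
    ring
  -- negCount computation
  rcases lt_or_gt_of_ne hj0 with hjneg | hjpos
  · -- j < 0
    set m := -j with hm
    have hm1 : 1 ≤ m := by omega
    have hmk : m ≠ k := by omega
    have hwm : w m = -(w j) := by rw [hm, hsym j]
    have hvm : (w * tt j k) m = -(w k) := by rw [hvnj, hsym k]
    set ε : ℕ := if w j < 0 ∧ 0 < w k then 1 else 0 with hεdef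
    have hmR : m ≤ (R:ℤ) := by rcases absZ j with ⟨e, e2⟩ | ⟨e, e2⟩ <;> omega
    have hkR : k ≤ (R:ℤ) := by rcases absZ k with ⟨e, e2⟩ | ⟨e, e2⟩ <;> omega
    have hsub : ({m, k} : Finset ℤ) ⊆ Finset.Icc 1 (R:ℤ) := by
      intro x hx
      simp only [Finset.mem_insert, Finset.mem_singleton] at hx
      rcases hx with rfl | rfl <;> simp only [Finset.mem_Icc] <;> omega
    have hdiff := negCount_diff hw hwt ({m, k} : Finset ℤ) hsub (by
      intro i hi his
      simp only [Finset.mem_insert, Finset.mem_singleton, not_or] at his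
      rw [Finset.mem_Icc] at hi
      exact hvne i (by omega) his.2 (by omega) (by omega))
    rw [Finset.sum_pair (by omega : m ≠ k)] at hdiff
    rw [hvm, hvk, hwm] at hdiff
    have hneg : negCount (w * tt j k) = negCount w + 2 * ε := by
      rw [hεdef]
      split_ifs at hdiff ⊢ <;> omega
    refine ⟨N2, ε, by rw [hεdef]; split_ifs <;> omega, hinv, hneg, ?_⟩
    intro hε
    have hc : w j < 0 ∧ 0 < w k := by
      by_contra hcc
      rw [hεdef, if_neg hcc] at hε
      omega
    constructor
    · rw [hN2def]
      refine Finset.card_pos.2 ⟨0, ?_⟩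
      rw [Finset.mem_filter, Finset.mem_Ioo]
      have h0 : w1 0 = 0 := by
        have h1 : (0:ℤ) ≠ j := by omega
        have h2 : (0:ℤ) ≠ k := by omega
        simp only [hw1def, Equiv.Perm.mul_apply, Equiv.swap_apply_of_ne_of_ne h1 h2, w0]
      rw [h0, hv1, hv2]
      omega
    · refine Finset.card_pos.2 ⟨0, ?_⟩
      rw [Finset.mem_filter, Finset.mem_Ioo, w0]
      omega
  · -- j > 0
    have hsub : ({j, k} : Finset ℤ) ⊆ Finset.Icc 1 (R:ℤ) := by
      intro x hx
      simp only [Finset.mem_insert, Finset.mem_singleton] at hx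
      have hjR : j ≤ (R:ℤ) := by rcases absZ j with ⟨e, e2⟩ | ⟨e, e2⟩ <;> omega
      have hkR : k ≤ (R:ℤ) := by rcases absZ k with ⟨e, e2⟩ | ⟨e, e2⟩ <;> omega
      rcases hx with rfl | rfl <;> simp only [Finset.mem_Icc] <;> omega
    have hdiff := negCount_diff hw hwt ({j, k} : Finset ℤ) hsub (by
      intro i hi his
      simp only [Finset.mem_insert, Finset.mem_singleton, not_or] at his
      rw [Finset.mem_Icc] at hi
      exact hvne i his.1 his.2 (by omega) (by omega))
    rw [Finset.sum_pair hjkne] at hdiff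
    rw [hvj, hvk] at hdiff
    have hneg : negCount (w * tt j k) = negCount w + 2 * 0 := by
      split_ifs at hdiff <;> omega
    exact ⟨N2, 0, by omega, hinv, hneg, by omega⟩


lemma lenC_eq (w : SPerm) : lenX XType.C w = lenX XType.B w := rfl

lemma sym_mul_tt {w : SPerm} (hsym : SymW w) {j k : ℤ}
    (hj0 : j ≠ 0) (hk0 : k ≠ 0) (hjk : j ≠ k) (hjnk : j ≠ -k) : SymW (w * tt j k) :=
  sym_mul hsym (tt_sym hj0 hk0 hjk hjnk)

set_option maxHeartbeats 800000 in
lemma step_plus {X : XType} {w : SPerm} {R : ℕ} (hw : Win w R) (hsym : SymW w)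
    {j k : ℤ} (hjk : j < k) (hk1 : 1 ≤ k) (hj0 : j ≠ 0) (hjnk : j ≠ -k)
    (hja : |j| ≤ (R:ℤ)) (hka : |k| ≤ (R:ℤ))
    (hlen : lenX X (w * tt j k) = lenX X w + 1) :
    w j < w k ∧ negCount (w * tt j k) = negCount w ∧
      ∀ h : ℤ, j < h → h < k → w j < w h → w h < w k → False := by
  have hk0 : k ≠ 0 := by omega
  have hjkne : j ≠ k := ne_of_lt hjk
  have hw' : Win (w * tt j k) R := win_mul_tt hw hj0 hk0 hjkne hjnk hja hka
  have hs' : SymW (w * tt j k) := sym_mul_tt hsym hj0 hk0 hjkne hjnk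
  have hvj : (w * tt j k) j = w k := by
    simp only [Equiv.Perm.mul_apply, tt_apply_j hj0 hk0 hjkne hjnk]
  have hvk : (w * tt j k) k = w j := by
    simp only [Equiv.Perm.mul_apply, tt_apply_k hj0 hk0 hjkne hjnk]
  obtain ⟨p, hp⟩ := invP_decomp hw hsym
  obtain ⟨p', hp'⟩ := invP_decomp hw' hs'
  have hAB : w j < w k := by
    rcases lt_trichotomy (w j) (w k) with h | h | h
    · exact h
    · exact absurd (w.injective h) hjkne
    · exfalso
      have hAB2 : (w * tt j k) j < (w * tt j k) k := by rw [hvj, hvk]; omega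
      obtain ⟨N2, ε, hε1, hinv, hneg, _⟩ :=
        tt_step hw' hs' hjk hk1 hj0 hjnk hja hka hAB2
      have h2 : w * tt j k * tt j k = w := by
        rw [mul_assoc, tt_sq hj0 hk0 hjkne hjnk, mul_one]
      rw [h2] at hinv hneg
      cases X <;> simp only [lenX] at hlen <;> omega
  obtain ⟨N2, ε, hε1, hinv, hneg, himp⟩ := tt_step hw hsym hjk hk1 hj0 hjnk hja hka hAB
  have hkey : ((Finset.Ioo j k).filter (fun h => w j < w h ∧ w h < w k)).card = 0
      ∧ negCount (w * tt j k) = negCount w := by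
    rcases Nat.eq_zero_or_pos ε with hε | hε
    · subst hε
      constructor
      · cases X <;> simp only [lenX] at hlen <;> omega
      · omega
    · obtain ⟨hN2, hN1⟩ := himp (by omega)
      exfalso
      cases X <;> simp only [lenX] at hlen <;> omega
  refine ⟨hAB, hkey.2, fun h hh1 hh2 hh3 hh4 => ?_⟩
  have hmem : h ∈ (Finset.Ioo j k).filter (fun h => w j < w h ∧ w h < w k) := by
    rw [Finset.mem_filter, Finset.mem_Ioo]
    exact ⟨⟨hh1, hh2⟩, hh3, hh4⟩
  have := Finset.card_pos.2 ⟨h, hmem⟩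
  omega

lemma sym_swapk {w : SPerm} (hsym : SymW w) (k : ℤ) : SymW (w * Equiv.swap (-k) k) := by
  intro i
  simp only [Equiv.Perm.mul_apply]
  by_cases h1 : i = k
  · rw [h1, Equiv.swap_apply_left, Equiv.swap_apply_right, hsym k, neg_neg]
  · by_cases h2 : i = -k
    · rw [h2, neg_neg, Equiv.swap_apply_right, Equiv.swap_apply_left, hsym k]
    · rw [Equiv.swap_apply_of_ne_of_ne (show -i ≠ -k by omega) (show -i ≠ k by omega),
        Equiv.swap_apply_of_ne_of_ne h2 h1, hsym i]

set_option maxHeartbeats 800000 in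
lemma step_zero_aux {w : SPerm} {R : ℕ} (hw : Win w R) (hsym : SymW w) {k : ℤ}
    (hk1 : 1 ≤ k) (hka : |k| ≤ (R:ℤ)) (hwk : 0 < w k) :
    ∃ M : ℕ, 1 ≤ M ∧ lenX XType.B (w * tt 0 k) = lenX XType.B w + 1 + M := by
  have hk0 : k ≠ 0 := by omega
  have w0 : w 0 = 0 := sym_zero hsym
  have hnka : |(-k)| ≤ (R:ℤ) := by rw [abs_neg]; exact hka
  have hvnk : w (-k) = -(w k) := hsym k
  have hsw := swap_invP hw (by omega : -k < k) hnka hka (by omega)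
  rw [tt_zero]
  have hwt : Win (w * Equiv.swap (-k) k) R := win_mul_swap hw hnka hka
  have hst : SymW (w * Equiv.swap (-k) k) := sym_swapk hsym k
  -- value at k
  have hvk : (w * Equiv.swap (-k) k) k = -(w k) := by
    simp only [Equiv.Perm.mul_apply, Equiv.swap_apply_right]
    exact hsym k
  -- negCount increases by 1
  have hkR : k ≤ (R:ℤ) := by rcases absZ k with ⟨e, e2⟩ | ⟨e, e2⟩ <;> omega
  have hsub : ({k} : Finset ℤ) ⊆ Finset.Icc 1 (R:ℤ) := by
    intro x hx
    simp only [Finset.mem_singleton] at hx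
    subst hx
    simp only [Finset.mem_Icc]
    omega
  have hdiff := negCount_diff hw hwt ({k} : Finset ℤ) hsub (by
    intro i hi his
    simp only [Finset.mem_singleton] at his
    rw [Finset.mem_Icc] at hi
    have h2 : i ≠ -k := by omega
    simp only [Equiv.Perm.mul_apply, Equiv.swap_apply_of_ne_of_ne h2 his]
    )
  rw [Finset.sum_singleton, hvk] at hdiff
  rw [if_pos (by omega), if_neg (by omega)] at hdiff
  have hneg : negCount (w * Equiv.swap (-k) k) = negCount w + 1 := by omega
  -- middle count at least 1 (h = 0)
  have hM : 1 ≤ ((Finset.Ioo (-k) k).filter (fun h => w (-k) < w h ∧ w h < w k)).card := by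
    refine Finset.card_pos.2 ⟨0, ?_⟩
    rw [Finset.mem_filter, Finset.mem_Ioo, w0, hvnk]
    omega
  obtain ⟨p, hp⟩ := invP_decomp hw hsym
  obtain ⟨p', hp'⟩ := invP_decomp hwt hst
  refine ⟨((Finset.Ioo (-k) k).filter (fun h => w (-k) < w h ∧ w h < w k)).card, hM, ?_⟩
  simp only [lenX]
  omega

lemma step_zero {X : XType} (hX : X ≠ XType.D) {w : SPerm} {R : ℕ}
    (hw : Win w R) (hsym : SymW w) {k : ℤ}
    (hk1 : 1 ≤ k) (hka : |k| ≤ (R:ℤ)) :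
    lenX X (w * tt 0 k) ≠ lenX X w + 1 := by
  have hXB : ∀ u : SPerm, lenX X u = lenX XType.B u := by
    intro u
    cases X
    · rfl
    · rfl
    · exact absurd rfl hX
  rw [hXB, hXB]
  have hk0 : k ≠ 0 := by omega
  have w0 : w 0 = 0 := sym_zero hsym
  have hwk0 : w k ≠ 0 := fun h => hk0 (w.injective (by rw [h, w0]))
  rcases lt_or_gt_of_ne hwk0 with hneg | hpos
  · -- w k < 0 : apply aux to w * tt 0 k
    intro hlen
    have hwt : Win (w * tt 0 k) R := by
      rw [tt_zero]
      exact win_mul_swap hw (by rw [abs_neg]; exact hka) hka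
    have hst : SymW (w * tt 0 k) := by
      rw [tt_zero]
      exact sym_swapk hsym k
    have hvk : (w * tt 0 k) k = -(w k) := by
      rw [tt_zero]
      simp only [Equiv.Perm.mul_apply, Equiv.swap_apply_right]
      exact hsym k
    obtain ⟨M, hM1, hM2⟩ := step_zero_aux hwt hst hk1 hka (by rw [hvk]; omega)
    have hsq : w * tt 0 k * tt 0 k = w := by
      rw [tt_zero, mul_assoc, Equiv.swap_mul_self, mul_one]
    rw [hsq, hlen] at hM2
    omega
  · intro hlen
    obtain ⟨M, hM1, hM2⟩ := step_zero_aux hw hsym hk1 hka hpos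
    rw [hlen] at hM2
    omega


lemma incSteps_cons {f : SPerm → ℕ} {u t : SPerm} {ts : List SPerm} :
    IncSteps f u (t :: ts) ↔ f (u * t) = f u + 1 ∧ IncSteps f (u * t) ts := Iff.rfl

set_option maxHeartbeats 3200000 in
lemma chain (X : XType) (n k : ℕ) (hk1 : 1 ≤ k) (hkn : k + 1 ≤ n) :
    ∀ (js : List ℤ) (w : SPerm), js.Pairwise (· < ·) →
      (∀ j ∈ js, j < (k:ℤ) ∧ j ≠ -(k:ℤ) ∧ (X = XType.D → j ≠ 0)) →
      SymW w → Win w n → Inc w ((k:ℤ)+1) →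
      IncSteps (lenX X) w (js.map (fun j => tt j (k:ℤ))) →
      SymW (w * (js.map (fun j => tt j (k:ℤ))).prod) ∧
      negCount (w * (js.map (fun j => tt j (k:ℤ))).prod) = negCount w ∧
      ((Win (w * (js.map (fun j => tt j (k:ℤ))).prod) n ∧
          Inc (w * (js.map (fun j => tt j (k:ℤ))).prod) ((k:ℤ)+1) ∧
          (js = [] ∨ (w * (js.map (fun j => tt j (k:ℤ))).prod) k < w k)) ∨
       (Win (w * (js.map (fun j => tt j (k:ℤ))).prod) (n+1) ∧
          Inc (w * (js.map (fun j => tt j (k:ℤ))).prod) (k:ℤ))) := by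
  intro js
  induction js with
  | nil =>
    intro w _ _ hsw hwin hinc _
    simp only [List.map_nil, List.prod_nil, mul_one]
    exact ⟨hsw, trivial, Or.inl ⟨hwin, hinc, Or.inl trivial⟩⟩
  | cons j rest IH =>
    intro w hsort hcond hsw hwin hinc hsteps
    have hkK : (1:ℤ) ≤ (k:ℤ) := by exact_mod_cast hk1
    have hknZ : (k:ℤ) + 1 ≤ (n:ℤ) := by exact_mod_cast hkn
    have hKabs : |(k:ℤ)| ≤ (n:ℤ) := by rw [abs_of_nonneg (by omega)]; omega
    obtain ⟨hj1, hj2, hj3⟩ := hcond j List.mem_cons_self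
    rw [List.map_cons] at hsteps
    obtain ⟨hstep1, hsteps'⟩ := hsteps
    by_cases hj0 : j = 0
    · exfalso
      have hXD : X ≠ XType.D := fun hX => (hj3 hX) hj0
      rw [hj0] at hstep1
      exact step_zero hXD hwin hsw hkK hKabs hstep1
    have hK0 : (k:ℤ) ≠ 0 := by omega
    have hjKne : j ≠ (k:ℤ) := ne_of_lt hj1
    have hwK : |w (k:ℤ)| ≤ (n:ℤ) := win_bound hwin hKabs
    set R : ℕ := max n j.natAbs with hRdef
    have hwinR : Win w R := win_mono hwin (le_max_left _ _)
    have hjaR : |j| ≤ (R:ℤ) := by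
      rw [Int.abs_eq_natAbs]
      exact_mod_cast le_max_right n j.natAbs
    have hkaR : |(k:ℤ)| ≤ (R:ℤ) := by
      rw [abs_of_nonneg (by omega)]
      have h : (n:ℤ) ≤ (R:ℤ) := by exact_mod_cast le_max_left n j.natAbs
      omega
    obtain ⟨hAB, hnegpres, noMid⟩ :=
      step_plus hwinR hsw hj1 hkK hj0 hj2 hjaR hkaR hstep1
    have hval : ∀ x : ℤ, x ≠ j → x ≠ (k:ℤ) → x ≠ -j → x ≠ -(k:ℤ) →
        (w * tt j (k:ℤ)) x = w x := by
      intro x h1 h2 h3 h4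
      simp only [Equiv.Perm.mul_apply, tt_apply_ne hj0 hK0 hjKne hj2 h1 h2 h3 h4]
    have hvalK : (w * tt j (k:ℤ)) (k:ℤ) = w j := by
      simp only [Equiv.Perm.mul_apply, tt_apply_k hj0 hK0 hjKne hj2]
    have hvalnj : (w * tt j (k:ℤ)) (-j) = -(w (k:ℤ)) := by
      simp only [Equiv.Perm.mul_apply, tt_apply_nj hj0 hK0 hjKne hj2]
      exact hsw (k:ℤ)
    have hsym1 : SymW (w * tt j (k:ℤ)) := sym_mul_tt hsw hj0 hK0 hjKne hj2
    have hprodC : w * ((tt j (k:ℤ) :: rest.map (fun j => tt j (k:ℤ)))).prod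
        = (w * tt j (k:ℤ)) * (rest.map (fun j => tt j (k:ℤ))).prod := by
      rw [List.prod_cons, mul_assoc]
    rcases (by omega : j ≤ -(n:ℤ)-2 ∨ j = -(n:ℤ)-1 ∨ -(n:ℤ) ≤ j) with hcase | hcase | hcase
    · -- impossible: j too negative
      exfalso
      have hwj : w j = j := hwin j (by rcases absZ j with ⟨e, e2⟩ | ⟨e, e2⟩ <;> omega)
      have hwh : w (-(n:ℤ)-1) = -(n:ℤ)-1 := hwin _ (by
        rcases absZ (-(n:ℤ)-1) with ⟨e, e2⟩ | ⟨e, e2⟩ <;> omega)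
      refine noMid (-(n:ℤ)-1) (by omega) (by omega) (by rw [hwj, hwh]; omega) ?_
      rw [hwh]
      rcases absZ (w (k:ℤ)) with ⟨e, e2⟩ | ⟨e, e2⟩ <;> omega
    · -- j = -(n+1)
      have hwj : w j = j := hwin j (by rcases absZ j with ⟨e, e2⟩ | ⟨e, e2⟩ <;> omega)
      have hwin1 : Win (w * tt j (k:ℤ)) (n+1) := by
        apply win_mul_tt (win_mono hwin (by omega)) hj0 hK0 hjKne hj2
        · rcases absZ j with ⟨e, e2⟩ | ⟨e, e2⟩ <;> push_cast <;> omega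
        · rw [abs_of_nonneg (by omega)]; push_cast; omega
      have hInc1 : Inc (w * tt j (k:ℤ)) (k:ℤ) := by
        intro i hi
        rcases (by omega : i = (k:ℤ) ∨ ((k:ℤ) < i ∧ i + 1 ≤ (n:ℤ)) ∨ i = (n:ℤ)
          ∨ i = (n:ℤ)+1 ∨ (n:ℤ)+2 ≤ i) with hc | hc | hc | hc | hc
        · rw [hc, hvalK, hwj,
            hval ((k:ℤ)+1) (by omega) (by omega) (by omega) (by omega)]
          have hb := win_bound hwin (show |(k:ℤ)+1| ≤ (n:ℤ) by
            rw [abs_of_nonneg (by omega)]; omega)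
          rcases absZ (w ((k:ℤ)+1)) with ⟨e, e2⟩ | ⟨e, e2⟩ <;> omega
        · rw [hval i (by omega) (by omega) (by omega) (by omega),
            hval (i+1) (by omega) (by omega) (by omega) (by omega)]
          exact hinc i (by omega)
        · rw [hc, hval (n:ℤ) (by omega) (by omega) (by omega) (by omega),
            show ((n:ℤ)+1) = -j by omega, hvalnj]
          by_contra hcon
          push_neg at hcon
          have hb := win_bound hwin (show |(n:ℤ)| ≤ (n:ℤ) by
            rw [abs_of_nonneg (by omega)])
          have hstrict : -(w (k:ℤ)) < w (n:ℤ) := by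
            rcases eq_or_lt_of_le hcon with he | hl
            · exfalso
              have h1 : w (-(k:ℤ)) = w (n:ℤ) := by rw [hsw (k:ℤ), he]
              have := w.injective h1
              omega
            · exact hl
          refine noMid (-(n:ℤ)) (by omega) (by omega) ?_ ?_
          · rw [hwj, hsw (n:ℤ)]
            rcases absZ (w (n:ℤ)) with ⟨e, e2⟩ | ⟨e, e2⟩ <;> omega
          · rw [hsw (n:ℤ)]
            omega
        · rw [hc, show ((n:ℤ)+1) = -j by omega, hvalnj,
            hval (-j+1) (by omega) (by omega) (by omega) (by omega)]
          have h2 : w (-j+1) = -j+1 := hwin _ (by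
            rcases absZ (-j+1) with ⟨e, e2⟩ | ⟨e, e2⟩ <;> omega)
          rw [h2]
          rcases absZ (w (k:ℤ)) with ⟨e, e2⟩ | ⟨e, e2⟩ <;> omega
        · rw [hwin1 i (by rcases absZ i with ⟨e, e2⟩ | ⟨e, e2⟩ <;> push_cast <;> omega),
            hwin1 (i+1) (by rcases absZ (i+1) with ⟨e, e2⟩ | ⟨e, e2⟩ <;> push_cast <;> omega)]
          omega
      cases rest with
      | nil =>
        rw [List.map_cons, hprodC]
        simp only [List.map_nil, List.prod_nil, mul_one]
        exact ⟨hsym1, hnegpres, Or.inr ⟨hwin1, hInc1⟩⟩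
      | cons r rest' =>
        exfalso
        rw [List.map_cons] at hsteps'
        obtain ⟨hstep2, _⟩ := hsteps'
        obtain ⟨hr1, hr2, hr3⟩ := hcond r (by simp)
        have hrj : j < r := (List.pairwise_cons.mp hsort).1 r (by simp)
        have hu1r : (w * tt j (k:ℤ)) r = w r :=
          hval r (by omega) (by omega) (by omega) (by omega)
        have hu1K : (w * tt j (k:ℤ)) (k:ℤ) = -(n:ℤ)-1 := by rw [hvalK, hwj, hcase]
        by_cases hr0 : r = 0
        · have hXD : X ≠ XType.D := fun hX => (hr3 hX) hr0
          rw [hr0] at hstep2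
          refine step_zero hXD hwin1 hsym1 hkK ?_ hstep2
          rw [abs_of_nonneg (by omega)]
          push_cast
          omega
        · have hwin1R : Win (w * tt j (k:ℤ)) (max (n+1) r.natAbs) :=
            win_mono hwin1 (le_max_left _ _)
          have hraR : |r| ≤ ((max (n+1) r.natAbs : ℕ):ℤ) := by
            rw [Int.abs_eq_natAbs]
            exact_mod_cast le_max_right (n+1) r.natAbs
          have hkaR2 : |(k:ℤ)| ≤ ((max (n+1) r.natAbs : ℕ):ℤ) := by
            rw [abs_of_nonneg (by omega)]
            have h : ((n+1:ℕ):ℤ) ≤ ((max (n+1) r.natAbs : ℕ):ℤ) := by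
              exact_mod_cast le_max_left (n+1) r.natAbs
            push_cast at h
            omega
          obtain ⟨hAB2, _, _⟩ :=
            step_plus hwin1R hsym1 hr1 hkK hr0 hr2 hraR hkaR2 hstep2
          rw [hu1r, hu1K] at hAB2
          rcases le_or_gt (|r|) (n:ℤ) with hrb | hrb
          · have hb := win_bound hwin hrb
            rcases absZ (w r) with ⟨e, e2⟩ | ⟨e, e2⟩ <;> omega
          · have hwr : w r = r := hwin r hrb
            rcases absZ r with ⟨e, e2⟩ | ⟨e, e2⟩ <;> omega
    · -- -n ≤ j
      have hjabs : |j| ≤ (n:ℤ) := by rcases absZ j with ⟨e, e2⟩ | ⟨e, e2⟩ <;> omega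
      have hwin1 : Win (w * tt j (k:ℤ)) n := win_mul_tt hwin hj0 hK0 hjKne hj2 hjabs hKabs
      have hInc1 : Inc (w * tt j (k:ℤ)) ((k:ℤ)+1) := by
        intro i hi
        by_cases hm1 : i = -j
        · rw [hm1, hvalnj, hval (-j+1) (by omega) (by omega) (by omega) (by omega)]
          have h1 : w (-j) = -(w j) := hsw j
          have h2 := hinc (-j) (by omega)
          omega
        · by_cases hm2 : i + 1 = -j
          · rw [show i = -j-1 by omega] at hi ⊢
            rw [hval (-j-1) (by omega) (by omega) (by omega) (by omega),
              show -j-1+1 = -j by ring, hvalnj]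
            by_contra hcon
            push_neg at hcon
            have hne : w (-(k:ℤ)) = -(w (k:ℤ)) := hsw (k:ℤ)
            have hstrict : -(w (k:ℤ)) < w (-j-1) := by
              rcases eq_or_lt_of_le hcon with he | hl
              · exfalso
                have h1 : w (-(k:ℤ)) = w (-j-1) := by rw [hne, he]
                have := w.injective h1
                omega
              · exact hl
            have h3 : w (j+1) = -(w (-j-1)) := by
              have hh := hsw (-j-1)
              rw [show -(-j-1) = j+1 by ring] at hh
              exact hh
            have h4 : w (-j) = -(w j) := hsw j
            have h5 : w (-j-1) < w (-j) := by
              have hh := hinc (-j-1) (by omega)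
              rw [show -j-1+1 = -j by ring] at hh
              exact hh
            exact noMid (j+1) (by omega) (by omega) (by omega) (by omega)
          · rw [hval i (by omega) (by omega) hm1 (by omega),
              hval (i+1) (by omega) (by omega) hm2 (by omega)]
            exact hinc i hi
      have hobt := IH (w * tt j (k:ℤ)) (List.pairwise_cons.mp hsort).2
        (fun x hx => hcond x (List.mem_cons_of_mem j hx)) hsym1 hwin1 hInc1 hsteps'
      rw [List.map_cons, hprodC]
      obtain ⟨hS, hN, hD⟩ := hobt
      refine ⟨hS, by rw [hN, hnegpres], ?_⟩
      rcases hD with ⟨h1, h2, h3⟩ | ⟨h1, h2⟩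
      · left
        refine ⟨h1, h2, Or.inr ?_⟩
        rcases h3 with h3 | h3
        · rw [h3]
          simp only [List.map_nil, List.prod_nil, mul_one]
          rw [hvalK]
          exact hAB
        · rw [hvalK] at h3
          omega
      · exact Or.inr ⟨h1, h2⟩


lemma isW_sym {X : XType} {w : SPerm} (h : IsW X w) : SymW w := by
  cases X
  · exact h.1
  · exact h.1
  · exact h.1.1

lemma isW_mk {X : XType} {w : SPerm} {N : ℕ} (hs : SymW w) (hwin : Win w N)
    (hE : X = XType.D → Even (negCount w)) : IsW X w := by
  have hfin : Set.Finite {i : ℤ | w i ≠ i} := by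
    apply Set.Finite.subset (Set.finite_Icc (-(N:ℤ)) (N:ℤ))
    intro i hi
    simp only [Set.mem_setOf_eq] at hi
    simp only [Set.mem_Icc]
    by_contra hc
    refine hi (hwin i ?_)
    rcases absZ i with ⟨e, e2⟩ | ⟨e, e2⟩ <;> omega
  cases X
  · exact ⟨hs, hfin⟩
  · exact ⟨hs, hfin⟩
  · exact ⟨⟨hs, hfin⟩, hE rfl⟩

lemma LD_lt_of_inc {u : SPerm} {c : ℕ} (h : Inc u (c:ℤ)) (hc : 0 < c) : LD u < c := by
  have hb : ∀ i ∈ DesSet u, i < c := by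
    intro i hi
    by_contra hcon
    push_neg at hcon
    have h1 := h (i:ℤ) (by exact_mod_cast hcon)
    have h2 := hi.2
    omega
  rcases Set.eq_empty_or_nonempty (DesSet u) with he | hne
  · rw [LD, he, csSup_empty]
    exact hc
  · have hbdd : BddAbove (DesSet u) := ⟨c, fun x hx => le_of_lt (hb x hx)⟩
    have hm : sSup (DesSet u) ∈ DesSet u := Nat.sSup_mem hne hbdd
    exact hb _ hm

lemma LD_eq_of_mem {u : SPerm} {c : ℕ} (h : Inc u ((c:ℤ)+1)) (hmem : c ∈ DesSet u) :
    LD u = c := by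
  have hb : ∀ i ∈ DesSet u, i ≤ c := by
    intro i hi
    by_contra hcon
    push_neg at hcon
    have h1 := h (i:ℤ) (by push_cast; omega)
    have h2 := hi.2
    omega
  exact le_antisymm (csSup_le ⟨c, hmem⟩ hb) (le_csSup ⟨c, fun x hx => hb x hx⟩ hmem)

/-- Technical lemma on chains from the last descent:
multiplying `v ∈ W^X_n` by a length-increasing chain of reflections
`t_{j_1,k} ⋯ t_{j_l,k}` in the column `k = LD(v)` yields an element that is
either in `W^X_n` and `≺_LD v`, or in `W^X_{n+1}` with smaller last descent. -/
theorem last_descent_chain_lemma (X : XType) (n : ℕ) (hn : 0 < n)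
    (v : SPerm) (hv : IsWn X n v) (hLD : 0 < LD v)
    (js : List ℤ) (hl : 1 ≤ js.length)
    (hsorted : (js.Pairwise (· < ·) ∧ ∀ j ∈ js, j < (LD v : ℤ)) ∨
      (X = XType.B ∧ js.getD 0 0 = 0 ∧ js.tail.Pairwise (· < ·) ∧
        ∀ j ∈ js.tail, j < (LD v : ℤ)))
    (hrefl : ∀ j ∈ js, j ≠ -(LD v : ℤ) ∧ (X = XType.D → j ≠ 0))
    (hinc : IncSteps (lenX X) v (js.map (fun j => tt j (LD v : ℤ)))) :
    (IsWn X n (v * (js.map (fun j => tt j (LD v : ℤ))).prod) ∧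
      precLD (v * (js.map (fun j => tt j (LD v : ℤ))).prod) v) ∨
    (IsWn X (n + 1) (v * (js.map (fun j => tt j (LD v : ℤ))).prod) ∧
      LD (v * (js.map (fun j => tt j (LD v : ℤ))).prod) < LD v) := by
  have hjsne : js ≠ [] := by
    intro h
    rw [h] at hl
    simp at hl
  set K := LD v with hKdef
  have hsymv : SymW v := isW_sym hv.1
  have hwinv : Win v n := hv.2
  have hED : X = XType.D → Even (negCount v) := by
    intro hX
    subst hX
    exact hv.1.2
  -- descent set of v
  have hDesBdd : ∀ i ∈ DesSet v, i ≤ n := by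
    intro i hi
    by_contra hcon
    push_neg at hcon
    have h1 : v (i:ℤ) = (i:ℤ) := hwinv _ (by
      rw [abs_of_nonneg (by positivity)]; exact_mod_cast hcon)
    have h2 : v ((i:ℤ)+1) = (i:ℤ)+1 := hwinv _ (by
      rw [abs_of_nonneg (by positivity)]; push_cast; omega)
    have h3 := hi.2
    omega
  have hBdd : BddAbove (DesSet v) := ⟨n, fun x hx => hDesBdd x hx⟩
  have hne : (DesSet v).Nonempty := by
    by_contra h
    rw [Set.not_nonempty_iff_eq_empty] at h
    rw [hKdef, LD, h, csSup_empty] at hLD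
    exact absurd hLD (lt_irrefl 0)
  have hKmem : K ∈ DesSet v := Nat.sSup_mem hne hBdd
  have hKdes : v ((K:ℤ)+1) < v (K:ℤ) := hKmem.2
  have hKn : K + 1 ≤ n := by
    have h1 : K ≤ n := hDesBdd K hKmem
    rcases Nat.lt_or_ge K n with h | h
    · omega
    · exfalso
      have hKeq : K = n := by omega
      have h2 : v ((K:ℤ)+1) = (K:ℤ)+1 := hwinv _ (by
        rw [abs_of_nonneg (by positivity)]; push_cast; omega)
      have h3 : |v (n:ℤ)| ≤ (n:ℤ) := win_bound hwinv (by
        rw [abs_of_nonneg (by positivity)])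
      rw [hKeq] at hKdes h2
      rcases absZ (v (n:ℤ)) with ⟨e, e2⟩ | ⟨e, e2⟩ <;> omega
  have hIncv : Inc v ((K:ℤ)+1) := by
    intro i hi
    have hinj : v i ≠ v (i+1) := fun h => by
      have := v.injective h
      omega
    by_contra hcon
    push_neg at hcon
    have himem : i.toNat ∈ DesSet v := by
      constructor
      · omega
      · rw [Int.toNat_of_nonneg (by omega)]
        omega
    have hle : i.toNat ≤ K := le_csSup hBdd himem
    omega
  -- dispatch the degenerate type-B branch
  rcases hsorted with ⟨hsort, hlt⟩ | ⟨hXB, hhead, _, _⟩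
  swap
  · exfalso
    subst hXB
    obtain ⟨j0, rest, rfl⟩ := List.exists_cons_of_ne_nil hjsne
    have hj00 : j0 = 0 := by simpa using hhead
    rw [List.map_cons] at hinc
    obtain ⟨hstep1, _⟩ := hinc
    rw [hj00] at hstep1
    refine step_zero (fun h => XType.noConfusion h) hwinv hsymv ?_ ?_ hstep1
    · exact_mod_cast hLD
    · rw [abs_of_nonneg (by positivity)]
      have hKle : K ≤ n := by omega
      exact_mod_cast hKle
  · have hcond : ∀ j ∈ js, j < (K:ℤ) ∧ j ≠ -(K:ℤ) ∧ (X = XType.D → j ≠ 0) :=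
      fun j hj => ⟨hlt j hj, (hrefl j hj).1, (hrefl j hj).2⟩
    obtain ⟨hS, hN, hD⟩ := chain X n K hLD hKn js v hsort hcond hsymv hwinv hIncv hinc
    set u := v * (js.map (fun j => tt j (K:ℤ))).prod with hu
    have hEu : X = XType.D → Even (negCount u) := by
      intro hX
      rw [hN]
      exact hED hX
    rcases hD with ⟨h1, h2, h3⟩ | ⟨h1, h2⟩
    · left
      have hlt3 : u (K:ℤ) < v (K:ℤ) := by
        rcases h3 with h3 | h3
        · exact absurd h3 hjsne
        · exact h3
      refine ⟨⟨isW_mk hS h1 hEu, h1⟩, ?_⟩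
      have huinj : u (K:ℤ) ≠ u ((K:ℤ)+1) := fun h => by
        have := u.injective h
        omega
      rcases lt_or_gt_of_ne huinj with hd | hd
      · -- no descent at K : LD u < K
        left
        refine LD_lt_of_inc ?_ hLD
        intro i hi
        rcases eq_or_lt_of_le hi with he | hlt2
        · rw [← he]
          exact hd
        · exact h2 i (by omega)
      · -- descent at K
        right
        have hmem : K ∈ DesSet u := ⟨hLD, hd⟩
        have hLDu : LD u = K := LD_eq_of_mem h2 hmem
        rw [hLDu]
        exact ⟨hLD, rfl, hlt3⟩
    · right
      refine ⟨⟨isW_mk hS h1 hEu, h1⟩, ?_⟩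
      exact LD_lt_of_inc h2 hLD
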